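/- In the feedback network built from a concept hierarchy, if B is presented at all times ≥ t, then firing of rep neurons is persistent: for every t' ≥ t and every concept c, if rep(c) fires at time t' then rep(c) fires at all times ≥ t'. -/
import Mathlib


open scoped Classical
noncomputable section

/-- A concept hierarchy: concepts at levels `0..L`, each concept at level `≥ 1`
has exactly `k` children one level below, level-0 concepts have no children,
there are exactly `k` top-level concepts, and every non-top concept has a parent. -/
structure ConceptHierarchy (α : Type) [DecidableEq α] where
  L : ℕ
  k : ℕ
  concepts : Finset α
  level : α → ℕ
  children : α → Finset α
  level_le : ∀ c ∈ concepts, level c ≤ L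
  children_mem : ∀ c ∈ concepts, ∀ c' ∈ children c, c' ∈ concepts
  children_level : ∀ c ∈ concepts, ∀ c' ∈ children c, level c' + 1 = level c
  children_card : ∀ c ∈ concepts, 1 ≤ level c → (children c).card = k
  children_leaf : ∀ c ∈ concepts, level c = 0 → children c = ∅
  top_card : (concepts.filter (fun c => level c = L)).card = k
  has_parent : ∀ c ∈ concepts, level c < L → ∃ c' ∈ concepts, c ∈ children c'

namespace ConceptHierarchy

variable {α : Type} [DecidableEq α]

/-- The parents of a concept. -/
def parents (H : ConceptHierarchy α) (c : α) : Finset α :=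
  H.concepts.filter (fun c' => c ∈ H.children c')

/-- Limited overlap: each concept at level `≥ 1` shares at most `o·k` children
with the union of the other concepts at the same level. -/
def LimitedOverlap (H : ConceptHierarchy α) (o : ℝ) : Prop :=
  ∀ c ∈ H.concepts, 1 ≤ H.level c →
    (((H.children c).filter (fun d => ∃ c' ∈ H.concepts, c' ≠ c ∧
        H.level c' = H.level c ∧ d ∈ H.children c')).card : ℝ) ≤ o * H.k

/-- Tree hierarchy: no overlap among child sets of distinct same-level concepts. -/
def IsTree (H : ConceptHierarchy α) : Prop :=
  ∀ c ∈ H.concepts, ∀ c' ∈ H.concepts, H.level c = H.level c' → c ≠ c' →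
    Disjoint (H.children c) (H.children c')

/-- Descendant relation: reflexive-transitive closure of the children relation. -/
inductive Desc (H : ConceptHierarchy α) : α → α → Prop
  | refl (c : α) : Desc H c c
  | step {c d e : α} : d ∈ H.children c → Desc H d e → Desc H c e

/-- The level-0 descendants of a concept. -/
def leaves (H : ConceptHierarchy α) (c : α) : Finset α :=
  H.concepts.filter (fun d => H.Desc c d ∧ H.level d = 0)

/-- Level-indexed bottom-up support sets: `S(0) = B ∩ C₀`,
`S(ℓ) = {c at level ℓ : |children(c) ∩ S(ℓ-1)| ≥ r·k}`. -/
def suppL (H : ConceptHierarchy α) (r : ℝ) (B : Finset α) : ℕ → Finset α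
  | 0 => B ∩ H.concepts.filter (fun c => H.level c = 0)
  | (ℓ+1) => H.concepts.filter (fun c => H.level c = ℓ + 1 ∧
      r * H.k ≤ ((H.children c ∩ suppL H r B ℓ).card : ℝ))

/-- `supp_r(B) = ⋃_ℓ S(ℓ)`. -/
def supp (H : ConceptHierarchy α) (r : ℝ) (B : Finset α) : Set α :=
  ⋃ ℓ, ↑(H.suppL r B ℓ)

/-- Time-and-level-indexed support sets with feedback strength `f`:
`S(0,t) = B`; `S(ℓ,0) = ∅` for `ℓ ≥ 1`; and
`S(ℓ,t) = S(ℓ,t-1) ∪ {c at level ℓ : |children(c) ∩ S(ℓ-1,t-1)| + f·|parents(c) ∩ S(ℓ+1,t-1)| ≥ r·k}`. -/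
def suppFB (H : ConceptHierarchy α) (r f : ℝ) (B : Finset α) : ℕ → ℕ → Finset α
  | 0, _ => B
  | (_+1), 0 => ∅
  | (ℓ+1), (t+1) => suppFB H r f B (ℓ+1) t ∪
      H.concepts.filter (fun c => H.level c = ℓ + 1 ∧
        r * H.k ≤ ((H.children c ∩ suppFB H r f B ℓ t).card : ℝ) +
          f * ((H.parents c ∩ suppFB H r f B (ℓ+2) t).card : ℝ))
  termination_by ℓ t => t

/-- `supp_{r,f}(B,*,t) = ⋃_ℓ S(ℓ,t)`. -/
def suppFBatTime (H : ConceptHierarchy α) (r f : ℝ) (B : Finset α) (t : ℕ) : Set α :=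
  ⋃ ℓ, ↑(H.suppFB r f B ℓ t)

/-- `supp_{r,f}(B) = ⋃_{ℓ,t} S(ℓ,t)`. -/
def suppFBSet (H : ConceptHierarchy α) (r f : ℝ) (B : Finset α) : Set α :=
  ⋃ t, H.suppFBatTime r f B t

end ConceptHierarchy

/-- Feed-forward 0/1 weights: weight 1 from the rep of a child to the rep of its
parent, weight 0 otherwise. -/
def ffWeight {α ν : Type} [DecidableEq α] (H : ConceptHierarchy α) (rep : α → ν)
    (u v : ν) : ℝ :=
  if ∃ c ∈ H.concepts, ∃ c' ∈ H.children c, u = rep c' ∧ v = rep c then 1 else 0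

/-- Feedback-network weights: weight 1 upward (rep of child to rep of parent),
weight `f` downward (rep of parent to rep of child), 0 otherwise. -/
def fbWeight {α ν : Type} [DecidableEq α] (H : ConceptHierarchy α) (rep : α → ν)
    (f : ℝ) (u v : ν) : ℝ :=
  if ∃ c ∈ H.concepts, ∃ c' ∈ H.children c, u = rep c' ∧ v = rep c then 1
  else if ∃ c ∈ H.concepts, ∃ c' ∈ H.children c, u = rep c ∧ v = rep c' then f
  else 0

/-- in the feedback network (upward weight 1, downward weight `f`),
if `B` is presented at all times `≥ t`, firing of rep neurons is persistent. -/
theorem fb_persistent_firing {α ν : Type} [DecidableEq α] [DecidableEq ν] [Fintype ν]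
    (H : ConceptHierarchy α) (rep : α → ν) (layer : ν → ℕ)
    (hrep_inj : ∀ c ∈ H.concepts, ∀ c' ∈ H.concepts, rep c = rep c' → c = c')
    (hrep_layer : ∀ c ∈ H.concepts, layer (rep c) = H.level c)
    (f τ : ℝ) (hf : 0 ≤ f)
    (firing : ν → ℕ → Prop) (B : Finset α)
    (hB : ∀ b ∈ B, b ∈ H.concepts ∧ H.level b = 0) (t : ℕ)
    (hpres : ∀ u : ν, layer u = 0 → ∀ s : ℕ, t ≤ s → (firing u s ↔ ∃ b ∈ B, u = rep b))
    (hinit : ∀ u : ν, 1 ≤ layer u → ¬ firing u t)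
    (hdyn : ∀ u : ν, 1 ≤ layer u → ∀ s : ℕ, (firing u (s + 1) ↔
        τ ≤ ∑ v ∈ Finset.univ.filter
            (fun v => (layer v + 1 = layer u ∨ layer v = layer u + 1) ∧ firing v s),
          fbWeight H rep f v u)) :
    ∀ c ∈ H.concepts, ∀ t' : ℕ, t ≤ t' → firing (rep c) t' →
      ∀ s : ℕ, t' ≤ s → firing (rep c) s := by
  have hw : ∀ u v : ν, 0 ≤ fbWeight H rep f v u := by
    intro u v
    unfold fbWeight
    split_ifs <;> simp [hf]
  have P : ∀ s : ℕ, t ≤ s → ∀ u : ν, firing u s → firing u (s + 1) := by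
    intro s hs
    induction s, hs using Nat.le_induction with
    | base =>
      intro u hu
      by_cases h0 : layer u = 0
      · obtain ⟨b, hb, hub⟩ := (hpres u h0 t le_rfl).mp hu
        exact (hpres u h0 (t + 1) (by omega)).mpr ⟨b, hb, hub⟩
      · exact absurd hu (hinit u (by omega))
    | succ s hs IH =>
      intro u hu
      by_cases h0 : layer u = 0
      · obtain ⟨b, hb, hub⟩ := (hpres u h0 (s + 1) (by omega)).mp hu
        exact (hpres u h0 (s + 2) (by omega)).mpr ⟨b, hb, hub⟩
      · have h1 : 1 ≤ layer u := by omega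
        rw [hdyn u h1 (s + 1)]
        have hsum := (hdyn u h1 s).mp hu
        refine le_trans hsum (Finset.sum_le_sum_of_subset_of_nonneg ?_ ?_)
        · intro v hv
          simp only [Finset.mem_filter, Finset.mem_univ, true_and] at hv ⊢
          exact ⟨hv.1, IH v hv.2⟩
        · intro v _ _
          exact hw u v
  intro c _ t' ht' hfire s hs
  induction s, hs using Nat.le_induction with
  | base => exact hfire
  | succ s hs IH => exact P s (le_trans ht' hs) _ IH
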